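/- Model rules abstractly as follows: a rule consists of a body B (a finite set of atoms) and a head that is a finite list of disjoint components D_1,...,D_m (each a finite set of atoms). Say the rule has disconnected disjunction if no two distinct head components D_i, D_j share a variable with the same connected component of B (connected components taken in the variable-hypergraph of B). Consider a rewriting step that, for some index i, removes D_i and replaces the body by B ∪ B' for some finite set of atoms B', where the variables of B' may only intersect variables of B lying in connected components of B that share variables with D_i (plus fresh variables). Then the resulting rule also has disconnected disjunction. -/
import Mathlib


/-- A relational atom over predicates `P`, variables `V` and constants `C`. -/
structure Atom (P V C : Type*) where
  pred : P
  args : List (V ⊕ C)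
deriving DecidableEq

/-- The variables occurring in an atom. -/
def Atom.vars {P V C : Type*} (a : Atom P V C) : Set V := {v | Sum.inl v ∈ a.args}

/-- The variables occurring in a finite set of atoms. -/
def varsFS {P V C : Type*} (F : Finset (Atom P V C)) : Set V :=
  {v | ∃ a ∈ F, v ∈ a.vars}

/-- Connectivity of variables in the variable-hypergraph of `F`. -/
def connR {P V C : Type*} (F : Finset (Atom P V C)) : V → V → Prop :=
  Relation.ReflTransGen (fun u v : V => ∃ a ∈ F, u ∈ a.vars ∧ v ∈ a.vars)

/-- Disconnected disjunction: no two distinct head components share a variable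
with the same connected component of the body `B`. -/
def DD {P V C : Type*} (B : Finset (Atom P V C))
    (H : List (Finset (Atom P V C))) : Prop :=
  ∀ i j : Fin H.length, i ≠ j → ∀ u v : V,
    u ∈ varsFS (H.get i) → v ∈ varsFS (H.get j) →
    u ∈ varsFS B → v ∈ varsFS B → ¬ connR B u v


section Aux
variable {P V C : Type*} [DecidableEq P] [DecidableEq V] [DecidableEq C]

omit [DecidableEq P] [DecidableEq V] [DecidableEq C] in
lemma connR_symm {F : Finset (Atom P V C)} {u v : V} (h : connR F u v) : connR F v u := by
  induction h with
  | refl => exact Relation.ReflTransGen.refl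
  | tail _ step ih =>
    obtain ⟨a, ha, hu, hv⟩ := step
    exact Relation.ReflTransGen.head ⟨a, ha, hv, hu⟩ ih

/-- Key path lemma: along any `B ∪ B'` path starting at a `B`-variable `u`,
either we stay `B`-connected to `u`, or both ends touch `T`. -/
lemma key {B B' : Finset (Atom P V C)} {T : Set V}
    (hT : ∀ v ∈ varsFS B', v ∈ varsFS B →
      ∃ p ∈ T, p ∈ varsFS B ∧ connR B p v)
    {u v : V} (h : connR (B ∪ B') u v) (hu : u ∈ varsFS B) :
    (v ∈ varsFS B ∧ (connR B u v ∨
      ((∃ p ∈ T, p ∈ varsFS B ∧ connR B p u) ∧ (∃ p ∈ T, p ∈ varsFS B ∧ connR B p v)))) ∨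
    (v ∉ varsFS B ∧ (∃ p ∈ T, p ∈ varsFS B ∧ connR B p u)) := by
  induction h with
  | refl => exact Or.inl ⟨hu, Or.inl Relation.ReflTransGen.refl⟩
  | @tail w v hpath step ih =>
    obtain ⟨a, ha, hw, hv⟩ := step
    rcases Finset.mem_union.mp ha with haB | haB'
    · -- the last edge is a `B`-edge; then `w, v ∈ varsFS B`
      have hwB : w ∈ varsFS B := ⟨a, haB, hw⟩
      have hvB : v ∈ varsFS B := ⟨a, haB, hv⟩
      rcases ih with ⟨_, hc⟩ | ⟨hwnB, _⟩
      · rcases hc with hcon | ⟨tu, p, hpT, hpB, hpw⟩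
        · exact Or.inl ⟨hvB, Or.inl (hcon.tail ⟨a, haB, hw, hv⟩)⟩
        · exact Or.inl ⟨hvB, Or.inr ⟨tu, p, hpT, hpB, hpw.tail ⟨a, haB, hw, hv⟩⟩⟩
      · exact absurd hwB hwnB
    · -- the last edge is a `B'`-edge
      have hwB' : w ∈ varsFS B' := ⟨a, haB', hw⟩
      have hvB' : v ∈ varsFS B' := ⟨a, haB', hv⟩
      have tu : ∃ p ∈ T, p ∈ varsFS B ∧ connR B p u := by
        rcases ih with ⟨hwB, hc⟩ | ⟨_, tu⟩
        · rcases hc with hcon | ⟨tu, _⟩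
          · obtain ⟨p, hpT, hpB, hpw⟩ := hT w hwB' hwB
            exact ⟨p, hpT, hpB, hpw.trans (connR_symm hcon)⟩
          · exact tu
        · exact tu
      by_cases hvB : v ∈ varsFS B
      · exact Or.inl ⟨hvB, Or.inr ⟨tu, hT v hvB' hvB⟩⟩
      · exact Or.inr ⟨hvB, tu⟩

end Aux

/-- a rewriting step that removes the head component `H.get i`
and adds to the body atoms `B'` whose variables either are fresh (occur in no
head component) or lie in connected components of `B` sharing variables with
`H.get i`, preserves disconnected disjunction. -/
theorem stmt11 {P V C : Type*} [DecidableEq P] [DecidableEq V] [DecidableEq C]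
    (B B' : Finset (Atom P V C)) (H : List (Finset (Atom P V C)))
    (i : Fin H.length)
    (hDD : DD B H)
    (hshared : ∀ v ∈ varsFS B', v ∈ varsFS B →
      ∃ u ∈ varsFS (H.get i), u ∈ varsFS B ∧ connR B u v)
    (hfresh : ∀ v ∈ varsFS B', v ∉ varsFS B →
      ∀ j : Fin H.length, v ∉ varsFS (H.get j)) :
    DD (B ∪ B') (H.eraseIdx i) := by
  intro j k hjk u v hu hv huB hvB hconn
  have hlen : (H.eraseIdx i).length = H.length - 1 := by
    rw [List.length_eraseIdx]; simp [i.isLt]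
  have hpos : 0 < H.length := i.pos
  -- index map from the erased list back to `H`
  let f : Fin (H.eraseIdx i).length → Fin H.length := fun j =>
    if _ : (j : ℕ) < (i : ℕ) then ⟨j, lt_trans (by assumption) i.isLt⟩
    else ⟨(j : ℕ) + 1, by have h2 := j.isLt; omega⟩
  have hf_get : ∀ j : Fin (H.eraseIdx i).length, (H.eraseIdx i).get j = H.get (f j) := by
    intro j
    simp only [List.get_eq_getElem, List.getElem_eraseIdx, f]
    split <;> rfl
  have hf_ne : ∀ j : Fin (H.eraseIdx i).length, f j ≠ i := by
    intro j
    apply Fin.ne_of_val_ne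
    simp only [f]
    split <;> simp <;> omega
  have hf_inj : ∀ j k : Fin (H.eraseIdx i).length, j ≠ k → f j ≠ f k := by
    intro j k hne
    have hvalne : (j : ℕ) ≠ (k : ℕ) := fun h => hne (Fin.val_injective h)
    apply Fin.ne_of_val_ne
    simp only [f]
    split <;> split <;> simp <;> omega
  rw [hf_get] at hu hv
  -- `u` and `v` are not fresh `B'` variables, hence are in `varsFS B`
  have huB2 : u ∈ varsFS B := by
    obtain ⟨a, ha, hva⟩ := huB
    rcases Finset.mem_union.mp ha with h | h
    · exact ⟨a, h, hva⟩
    · by_contra hno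
      exact hfresh u ⟨a, h, hva⟩ hno (f j) hu
  have hvB2 : v ∈ varsFS B := by
    obtain ⟨a, ha, hva⟩ := hvB
    rcases Finset.mem_union.mp ha with h | h
    · exact ⟨a, h, hva⟩
    · by_contra hno
      exact hfresh v ⟨a, h, hva⟩ hno (f k) hv
  -- apply the key path lemma
  rcases key hshared hconn huB2 with ⟨_, hc⟩ | ⟨hnv, _⟩
  · rcases hc with hcon | ⟨⟨p, hpT, hpB, hpu⟩, _⟩
    · exact hDD (f j) (f k) (hf_inj j k hjk) u v hu hv huB2 hvB2 hcon
    · exact hDD i (f j) (Ne.symm (hf_ne j)) p u hpT hu hpB huB2 hpu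
  · exact hnv hvB2
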